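/- Fix n ≥ 1 and L ≥ 0. Let T and S be elements of the monoid algebra AddMonoidAlgebra ℂ ℝ (finitely supported functions ℝ → ℂ with convolution product) whose supports are contained in the grid {ℓ/n : ℓ ∈ ℤ, −L ≤ ℓ ≤ L}. Then for every ε > 0 there exist T', S' ∈ AddMonoidAlgebra ℂ ℝ, also supported in {ℓ/n : ℓ ∈ ℤ, −L ≤ ℓ ≤ L}, with |T'(x) − T(x)| < ε and |S'(x) − S(x)| < ε for every x ∈ ℝ, and elements U, V ∈ AddMonoidAlgebra ℂ ℝ supported in {ℓ/n : ℓ ∈ ℤ} such that T' * U + S' * V = 1 (where * is the convolution product and 1 is the delta at 0). -/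

import Mathlib

open Polynomial LaurentPolynomial

/-- Bezout step at the level of Laurent polynomials: if `t ≠ 0`, we can shift `s` by an
arbitrarily small constant so that the pair generates the unit ideal. -/
lemma laurent_bezout (t s : LaurentPolynomial ℂ) (ht : t ≠ 0) {ε : ℝ} (hε : 0 < ε) :
    ∃ (c : ℂ) (u v : LaurentPolynomial ℂ),
      ‖c‖ < ε ∧ t * u + (s + LaurentPolynomial.C c) * v = 1 := by
  obtain ⟨m, p, hp⟩ := t.exists_T_pow
  obtain ⟨m', q, hq⟩ := s.exists_T_pow
  have hp0 : p ≠ 0 := by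
    rintro rfl
    rw [map_zero] at hp
    apply ht
    have h2 : t * (T (m : ℤ) * T (-(m : ℤ))) = 0 := by rw [← mul_assoc, ← hp, zero_mul]
    rwa [← T_add, add_neg_cancel, T_zero, mul_one] at h2
  -- choose a small real constant avoiding the finitely many bad values
  set F : Finset ℂ := (p.roots.toFinset).image (fun z => -(q.eval z) / z ^ m') with hF
  have hinf : ((fun x : ℝ => (x : ℂ)) '' Set.Ioo 0 ε).Infinite :=
    (Set.Ioo_infinite hε).image (fun a _ b _ h => by exact_mod_cast h)
  obtain ⟨c, hcmem, hcF⟩ := hinf.exists_notMem_finset F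
  obtain ⟨c0, hc0, rfl⟩ := hcmem
  have habs : ‖((c0 : ℝ) : ℂ)‖ < ε := by
    simpa [Complex.norm_real, abs_of_pos hc0.1] using hc0.2
  -- the perturbed polynomial
  set q' : ℂ[X] := q + Polynomial.C (c0 : ℂ) * X ^ m' with hq'def
  have hq' : toLaurent q' = (s + LaurentPolynomial.C (c0 : ℂ)) * T m' := by
    rw [hq'def, map_add, hq, Polynomial.toLaurent_C_mul_X_pow, add_mul]
  set g : ℂ[X] := EuclideanDomain.gcd p q' with hg
  have hg0 : g ≠ 0 := by
    intro h
    exact hp0 (EuclideanDomain.gcd_eq_zero_iff.mp h).1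
  -- every root of g is zero
  have hroots : ∀ z ∈ g.roots, z = 0 := by
    intro z hz
    by_contra hz0
    have hzg : g.eval z = 0 := (Polynomial.isRoot_of_mem_roots hz)
    have hzp : p.eval z = 0 := by
      obtain ⟨a, ha⟩ := EuclideanDomain.gcd_dvd_left p q'
      rw [← hg] at ha
      rw [ha]
      simp [hzg]
    have hzq' : q'.eval z = 0 := by
      obtain ⟨a, ha⟩ := EuclideanDomain.gcd_dvd_right p q'
      rw [← hg] at ha
      rw [ha]
      simp [hzg]
    apply hcF
    rw [hF]
    refine Finset.mem_image.mpr ⟨z, ?_, ?_⟩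
    · rw [Multiset.mem_toFinset, Polynomial.mem_roots hp0]
      exact hzp
    · have hzpow : z ^ m' ≠ 0 := pow_ne_zero _ hz0
      have h3 : q.eval z + (c0 : ℂ) * z ^ m' = 0 := by
        simpa [hq'def] using hzq'
      field_simp
      linear_combination -h3
  -- hence g = C (leadingCoeff) * X ^ k, a unit in Laurent polynomials
  have hsplit : g = Polynomial.C g.leadingCoeff *
      (g.roots.map (fun a => X - Polynomial.C a)).prod :=
    (IsAlgClosed.splits g).eq_prod_roots
  have hmap : (g.roots.map (fun a => X - Polynomial.C a))
      = g.roots.map (fun _ => (X : ℂ[X])) :=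
    Multiset.map_congr rfl (fun z hz => by rw [hroots z hz, map_zero, sub_zero])
  have hgform : g = Polynomial.C g.leadingCoeff * X ^ Multiset.card g.roots := by
    conv_lhs => rw [hsplit]
    rw [hmap, Multiset.map_const', Multiset.prod_replicate]
  have hunit : IsUnit (toLaurent g) := by
    rw [hgform, Polynomial.toLaurent_C_mul_X_pow]
    exact ((isUnit_iff_ne_zero.mpr (Polynomial.leadingCoeff_ne_zero.mpr hg0)).map
      (LaurentPolynomial.C (R := ℂ))).mul (isUnit_T _)
  obtain ⟨w, hw⟩ := hunit
  have hbez : (toLaurent g : LaurentPolynomial ℂ)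
      = t * (T m * toLaurent (EuclideanDomain.gcdA p q'))
        + (s + LaurentPolynomial.C (c0 : ℂ)) * (T m' * toLaurent (EuclideanDomain.gcdB p q')) := by
    have h4 := congrArg toLaurent (EuclideanDomain.gcd_eq_gcd_ab p q')
    rw [map_add, map_mul, map_mul, hp, hq'] at h4
    rw [← hg] at h4
    rw [h4]
    ring
  have hinv : (toLaurent g) * (↑w⁻¹ : LaurentPolynomial ℂ) = 1 := by
    rw [← hw]; exact w.mul_inv
  refine ⟨(c0 : ℂ), T m * toLaurent (EuclideanDomain.gcdA p q') * (↑w⁻¹ : LaurentPolynomial ℂ),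
    T m' * toLaurent (EuclideanDomain.gcdB p q') * (↑w⁻¹ : LaurentPolynomial ℂ), habs, ?_⟩
  calc t * (T m * toLaurent (EuclideanDomain.gcdA p q') * (↑w⁻¹ : LaurentPolynomial ℂ))
      + (s + LaurentPolynomial.C (c0 : ℂ))
        * (T m' * toLaurent (EuclideanDomain.gcdB p q') * (↑w⁻¹ : LaurentPolynomial ℂ))
      = (t * (T m * toLaurent (EuclideanDomain.gcdA p q'))
        + (s + LaurentPolynomial.C (c0 : ℂ))
          * (T m' * toLaurent (EuclideanDomain.gcdB p q')))
          * (↑w⁻¹ : LaurentPolynomial ℂ) := by ring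
    _ = 1 := by rw [← hbez, hinv]

/-- The additive monoid morphism `ℤ →+ ℝ`, `ℓ ↦ ℓ / n`. -/
noncomputable def gridHom (n : ℕ) : ℤ →+ ℝ :=
  AddMonoidHom.mk' (fun ℓ => (ℓ : ℝ) / n) (by intro a b; push_cast; ring)

lemma gridHom_apply (n : ℕ) (ℓ : ℤ) : gridHom n ℓ = (ℓ : ℝ) / n := rfl

lemma gridHom_injective {n : ℕ} (hn : 1 ≤ n) : Function.Injective (gridHom n) := by
  intro a b h
  have hn' : (n : ℝ) ≠ 0 := Nat.cast_ne_zero.mpr (by omega)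
  rw [gridHom_apply, gridHom_apply, div_eq_div_iff hn' hn'] at h
  have h2 : (a : ℝ) = b := mul_right_cancel₀ hn' h
  exact_mod_cast h2

/-- One-sided main lemma: if `T ≠ 0` is supported on the grid and `S` is supported on the
grid, a small shift of `S` at `0` makes the pair unimodular with cofactors on the grid. -/
lemma one_sided (n : ℕ) (hn : 1 ≤ n) (T S : AddMonoidAlgebra ℂ ℝ)
    (hT : ∀ x ∈ T.coeff.support, ∃ ℓ : ℤ, x = (ℓ : ℝ) / n)
    (hS : ∀ x ∈ S.coeff.support, ∃ ℓ : ℤ, x = (ℓ : ℝ) / n)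
    (hT0 : T ≠ 0) {ε : ℝ} (hε : 0 < ε) :
    ∃ (c : ℂ) (U V : AddMonoidAlgebra ℂ ℝ),
      ‖c‖ < ε ∧
      (∀ x ∈ U.coeff.support, ∃ ℓ : ℤ, x = (ℓ : ℝ) / n) ∧
      (∀ x ∈ V.coeff.support, ∃ ℓ : ℤ, x = (ℓ : ℝ) / n) ∧
      T * U + (S + AddMonoidAlgebra.single (0:ℝ) c) * V = 1 := by
  classical
  have hfi : Function.Injective ⇑(gridHom n) := gridHom_injective hn
  have hTr : ↑T.coeff.support ⊆ Set.range ⇑(gridHom n) := by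
    intro x hx
    obtain ⟨ℓ, hℓ⟩ := hT x hx
    exact ⟨ℓ, hℓ.symm⟩
  have hSr : ↑S.coeff.support ⊆ Set.range ⇑(gridHom n) := by
    intro x hx
    obtain ⟨ℓ, hℓ⟩ := hS x hx
    exact ⟨ℓ, hℓ.symm⟩
  set t : AddMonoidAlgebra ℂ ℤ := AddMonoidAlgebra.comapDomain ⇑(gridHom n) hfi T with htdef
  set s : AddMonoidAlgebra ℂ ℤ := AddMonoidAlgebra.comapDomain ⇑(gridHom n) hfi S with hsdef
  have ht : AddMonoidAlgebra.mapDomain ⇑(gridHom n) t = T :=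
    AddMonoidAlgebra.mapDomain_comapDomain hTr hfi
  have hs : AddMonoidAlgebra.mapDomain ⇑(gridHom n) s = S :=
    AddMonoidAlgebra.mapDomain_comapDomain hSr hfi
  have ht0 : t ≠ 0 := by
    rintro h
    apply hT0
    rw [← ht, h, AddMonoidAlgebra.mapDomain_zero]
  obtain ⟨c, u, v, hc, hbez⟩ := laurent_bezout t s ht0 hε
  set φ : AddMonoidAlgebra ℂ ℤ →+* AddMonoidAlgebra ℂ ℝ :=
    AddMonoidAlgebra.mapDomainRingHom ℂ (gridHom n) with hφ
  have hφ_apply : ∀ a : AddMonoidAlgebra ℂ ℤ, φ a = AddMonoidAlgebra.mapDomain ⇑(gridHom n) a :=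
    fun a => rfl
  refine ⟨c, φ u, φ v, hc, ?_, ?_, ?_⟩
  · intro x hx
    rw [hφ_apply] at hx
    obtain ⟨ℓ, _, rfl⟩ := Finset.mem_image.mp (Finsupp.mapDomain_support (f := ⇑(gridHom n)) (s := u.coeff) hx)
    exact ⟨ℓ, rfl⟩
  · intro x hx
    rw [hφ_apply] at hx
    obtain ⟨ℓ, _, rfl⟩ := Finset.mem_image.mp (Finsupp.mapDomain_support (f := ⇑(gridHom n)) (s := v.coeff) hx)
    exact ⟨ℓ, rfl⟩
  · have h5 := congrArg φ hbez
    rw [map_one, map_add, map_mul, map_mul, map_add] at h5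
    rw [hφ_apply t, hφ_apply s, ht, hs] at h5
    have hsingle : φ (LaurentPolynomial.C c : AddMonoidAlgebra ℂ ℤ)
        = AddMonoidAlgebra.single (0:ℝ) c := by
      rw [hφ_apply, ← LaurentPolynomial.single_eq_C, AddMonoidAlgebra.mapDomain_single, map_zero]
    rw [hsingle] at h5
    exact h5

lemma abs_single_le (c : ℂ) (x y : ℝ) :
    ‖(AddMonoidAlgebra.single y c).coeff x‖ ≤ ‖c‖ := by
  rw [AddMonoidAlgebra.coeff_single, Finsupp.single_apply]
  split <;> simp

lemma add_sub_apply (S : AddMonoidAlgebra ℂ ℝ) (c : ℂ) (x : ℝ) :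
    (S + AddMonoidAlgebra.single (0:ℝ) c).coeff x - S.coeff x
      = (AddMonoidAlgebra.single (0:ℝ) c).coeff x := by
  have : (S + AddMonoidAlgebra.single (0:ℝ) c).coeff x
      = S.coeff x + (AddMonoidAlgebra.single (0:ℝ) c).coeff x := Finsupp.add_apply _ _ _
  rw [this]
  ring

/-- A pair of "Dirac delta combs" with spacing `1/n` supported in `{ℓ/n : -L ≤ ℓ ≤ L}`
(modelled as elements of the convolution algebra `AddMonoidAlgebra ℂ ℝ` of finite linear
combinations of Dirac deltas) can be approximated, arbitrarily well in the coefficients,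
by a unimodular pair of such combs. -/
theorem dirac_comb_approx_unimodular (n : ℕ) (hn : 1 ≤ n) (L : ℤ) (hL : 0 ≤ L)
    (T S : AddMonoidAlgebra ℂ ℝ)
    (hT : ∀ x ∈ T.coeff.support, ∃ ℓ : ℤ, -L ≤ ℓ ∧ ℓ ≤ L ∧ x = (ℓ : ℝ) / n)
    (hS : ∀ x ∈ S.coeff.support, ∃ ℓ : ℤ, -L ≤ ℓ ∧ ℓ ≤ L ∧ x = (ℓ : ℝ) / n)
    {ε : ℝ} (hε : 0 < ε) :
    ∃ T' S' U V : AddMonoidAlgebra ℂ ℝ,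
      (∀ x ∈ T'.coeff.support, ∃ ℓ : ℤ, -L ≤ ℓ ∧ ℓ ≤ L ∧ x = (ℓ : ℝ) / n) ∧
      (∀ x ∈ S'.coeff.support, ∃ ℓ : ℤ, -L ≤ ℓ ∧ ℓ ≤ L ∧ x = (ℓ : ℝ) / n) ∧
      (∀ x : ℝ, ‖T'.coeff x - T.coeff x‖ < ε) ∧
      (∀ x : ℝ, ‖S'.coeff x - S.coeff x‖ < ε) ∧
      (∀ x ∈ U.coeff.support, ∃ ℓ : ℤ, x = (ℓ : ℝ) / n) ∧
      (∀ x ∈ V.coeff.support, ∃ ℓ : ℤ, x = (ℓ : ℝ) / n) ∧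
      T' * U + S' * V = 1 := by
  classical
  have hzero_grid : (0 : ℝ) = ((0 : ℤ) : ℝ) / n := by simp
  have hsingle_supp : ∀ (c : ℂ) (x : ℝ),
      x ∈ (AddMonoidAlgebra.single (0:ℝ) c).coeff.support → x = 0 := by
    intro c x hx
    rw [AddMonoidAlgebra.coeff_single] at hx
    have := Finsupp.support_single_subset hx
    simpa using this
  by_cases hT0 : T = 0
  · by_cases hS0 : S = 0
    · -- both zero: take T' a small delta at 0, which is a unit
      refine ⟨AddMonoidAlgebra.single (0:ℝ) ((ε / 2 : ℝ) : ℂ), 0,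
        AddMonoidAlgebra.single (0:ℝ) ((2 / ε : ℝ) : ℂ), 0,
        ?_, ?_, ?_, ?_, ?_, ?_, ?_⟩
      · intro x hx
        exact ⟨0, by omega, hL, by rw [hsingle_supp _ x hx]; exact hzero_grid⟩
      · simp
      · intro x
        rw [hT0]
        calc ‖(AddMonoidAlgebra.single (0:ℝ) ((ε / 2 : ℝ) : ℂ)).coeff x - (0 : AddMonoidAlgebra ℂ ℝ).coeff x‖
            ≤ ‖(((ε / 2 : ℝ) : ℂ))‖ := by
              simpa using abs_single_le ((ε / 2 : ℝ) : ℂ) x 0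
          _ < ε := by rw [Complex.norm_real, Real.norm_of_nonneg (by linarith)]; linarith
      · intro x
        rw [hS0]
        simpa using hε
      · intro x hx
        exact ⟨0, by rw [hsingle_supp _ x hx]; exact hzero_grid⟩
      · simp
      · rw [AddMonoidAlgebra.single_mul_single]
        have hεne : (ε : ℝ) ≠ 0 := ne_of_gt hε
        have hεC : (ε : ℂ) ≠ 0 := by exact_mod_cast hεne
        have h6 : ((ε / 2 : ℝ) : ℂ) * ((2 / ε : ℝ) : ℂ) = 1 := by
          push_cast
          field_simp
        rw [h6]
        simp [AddMonoidAlgebra.one_def]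
    · -- T = 0, S ≠ 0 : perturb T
      obtain ⟨c, U, V, hc, hU, hV, hbez⟩ := one_sided n hn S T
        (fun x hx => (hS x hx).imp fun ℓ h => h.2.2)
        (fun x hx => (hT x hx).imp fun ℓ h => h.2.2) hS0 hε
      refine ⟨T + AddMonoidAlgebra.single (0:ℝ) c, S, V, U,
        ?_, hS, ?_, ?_, hV, hU, ?_⟩
      · intro x hx
        rcases Finset.mem_union.mp (Finsupp.support_add hx) with h | h
        · exact hT x h
        · exact ⟨0, by omega, hL, by rw [hsingle_supp _ x h]; exact hzero_grid⟩
      · intro x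
        rw [add_sub_apply]
        exact lt_of_le_of_lt (abs_single_le c x 0) hc
      · intro x
        simpa using hε
      · rw [add_comm]
        exact hbez
  · -- T ≠ 0 : perturb S
    obtain ⟨c, U, V, hc, hU, hV, hbez⟩ := one_sided n hn T S
      (fun x hx => (hT x hx).imp fun ℓ h => h.2.2)
      (fun x hx => (hS x hx).imp fun ℓ h => h.2.2) hT0 hε
    refine ⟨T, S + AddMonoidAlgebra.single (0:ℝ) c, U, V,
      hT, ?_, ?_, ?_, hU, hV, hbez⟩
    · intro x hx
      rcases Finset.mem_union.mp (Finsupp.support_add hx) with h | h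
      · exact hS x h
      · exact ⟨0, by omega, hL, by rw [hsingle_supp _ x h]; exact hzero_grid⟩
    · intro x
      simpa using hε
    · intro x
      rw [add_sub_apply]
      exact lt_of_le_of_lt (abs_single_le c x 0) hc
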